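/- Let t be a positive integer, l₁, …, l_t positive integers with sum l, and set k := l − max_i lᵢ. Let q₁, …, q_t be rational numbers with qᵢ ≥ −2 for all i and q_{i₀} ≥ 0 for some index i₀, and set Q := Σᵢ qᵢ/(2lᵢ). Then Σᵢ ((l − lᵢ)/(2lᵢ))·qᵢ ≥ k·Q − (l − 1 − k)·k. -/

import Mathlib

/-- Let `l₁, …, l_t` be positive integers with sum `L` and
`k = L - max lᵢ`. If `qᵢ ≥ -2` for all `i` and `q_{i₀} ≥ 0` for some `i₀`, then,
with `Q = Σ qᵢ/(2lᵢ)`, one has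
`Σᵢ ((L - lᵢ)/(2lᵢ)) qᵢ ≥ k Q - (L - 1 - k) k`. -/
theorem jordan_holder_estimate (t : ℕ) (ht : 0 < t)
    (l : Fin t → ℤ) (hl : ∀ i, 0 < l i)
    (L k : ℤ) (hL : L = ∑ i, l i)
    (hk : k = L - Finset.univ.sup' ⟨⟨0, ht⟩, Finset.mem_univ _⟩ l)
    (q : Fin t → ℚ) (hq : ∀ i, -2 ≤ q i) (i₀ : Fin t) (hq0 : 0 ≤ q i₀) :
    (k : ℚ) * (∑ i, q i / (2 * (l i : ℚ))) - ((L : ℚ) - 1 - (k : ℚ)) * (k : ℚ)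
      ≤ ∑ i, ((L - l i : ℤ) : ℚ) / (2 * (l i : ℚ)) * q i := by
  have hM_ge : ∀ i, l i ≤ Finset.univ.sup' ⟨⟨0, ht⟩, Finset.mem_univ _⟩ l :=
    fun i => Finset.le_sup' l (Finset.mem_univ i)
  obtain ⟨jm, -, hjm⟩ := Finset.exists_mem_eq_sup' ⟨⟨0, ht⟩, Finset.mem_univ _⟩ l
  have hkn : ∀ i, (0:ℤ) ≤ L - l i - k := by intro i; have := hM_ge i; omega
  have hLk : (1:ℤ) ≤ L - k := by rw [hk, hjm]; have := hl jm; omega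
  -- k ≥ t - 1
  have hsum : ∑ i, l i = l jm + ∑ i ∈ Finset.univ.erase jm, l i :=
    (Finset.add_sum_erase _ _ (Finset.mem_univ jm)).symm
  have hcard : (Finset.univ.erase jm).card = t - 1 := by
    simp [Finset.card_erase_of_mem]
  have hkt : (t:ℤ) - 1 ≤ k := by
    have h2 : ((t - 1 : ℕ) : ℤ) ≤ ∑ i ∈ Finset.univ.erase jm, l i := by
      rw [← hcard]
      calc ((Finset.univ.erase jm).card : ℤ) = ∑ _i ∈ Finset.univ.erase jm, 1 := by simp
        _ ≤ ∑ i ∈ Finset.univ.erase jm, l i :=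
          Finset.sum_le_sum (fun i _ => hl i)
    rw [hk, hjm, hL, hsum]
    omega
  -- coefficients
  set c : Fin t → ℚ := fun i => ((L - l i - k : ℤ) : ℚ) / (2 * (l i : ℚ)) with hc
  have hlpos : ∀ i, (0:ℚ) < (l i : ℚ) := fun i => by exact_mod_cast hl i
  have hcnn : ∀ i, 0 ≤ c i := fun i =>
    div_nonneg (by exact_mod_cast hkn i) (by have := hlpos i; linarith)
  -- rewrite goal
  have hsplit : ∑ i, ((L - l i : ℤ) : ℚ) / (2 * (l i : ℚ)) * q i
      - (k : ℚ) * (∑ i, q i / (2 * (l i : ℚ))) = ∑ i, c i * q i := by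
    rw [Finset.mul_sum, ← Finset.sum_sub_distrib]
    refine Finset.sum_congr rfl (fun i _ => ?_)
    have h2 : (2 * (l i : ℚ)) ≠ 0 := ne_of_gt (by have := hlpos i; linarith)
    simp only [hc]
    push_cast
    ring
  rw [show (k : ℚ) * (∑ i, q i / (2 * (l i : ℚ))) - ((L : ℚ) - 1 - (k : ℚ)) * (k : ℚ)
      = (k : ℚ) * (∑ i, q i / (2 * (l i : ℚ))) + (-(((L : ℚ) - 1 - (k : ℚ)) * (k : ℚ))) by ring]
  rw [← sub_nonneg]
  have : ∑ i, ((L - l i : ℤ) : ℚ) / (2 * (l i : ℚ)) * q i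
      - ((k : ℚ) * (∑ i, q i / (2 * (l i : ℚ))) + (-(((L : ℚ) - 1 - (k : ℚ)) * (k : ℚ))))
      = (∑ i, c i * q i) + ((L : ℚ) - 1 - (k : ℚ)) * (k : ℚ) := by
    rw [← hsplit]; ring
  rw [this]
  -- bound sum from below
  have hterm : ∀ i ∈ Finset.univ.erase jm ∪ Finset.univ, True := fun _ _ => trivial
  have hbound : ∀ i, i ≠ i₀ → -(((L : ℚ) - 1 - (k : ℚ))) ≤ c i * q i := by
    intro i _
    have h1 : -2 * c i ≤ c i * q i := by
      have := mul_le_mul_of_nonneg_left (hq i) (hcnn i)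
      linarith
    have h2 : c i ≤ ((L - l i - k : ℤ) : ℚ) / 2 := by
      rw [hc]
      apply div_le_div_of_nonneg_left (by exact_mod_cast hkn i) (by norm_num)
      have : (1:ℚ) ≤ (l i : ℚ) := by exact_mod_cast hl i
      linarith
    have h3 : ((L - l i - k : ℤ) : ℚ) ≤ (L : ℚ) - 1 - (k : ℚ) := by
      push_cast
      have : (1:ℚ) ≤ (l i : ℚ) := by exact_mod_cast hl i
      linarith
    linarith
  have hsum2 : ∑ i, c i * q i = c i₀ * q i₀ + ∑ i ∈ Finset.univ.erase i₀, c i * q i :=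
    (Finset.add_sum_erase _ _ (Finset.mem_univ i₀)).symm
  have h4 : ∑ i ∈ Finset.univ.erase i₀, (-(((L : ℚ) - 1 - (k : ℚ))))
      ≤ ∑ i ∈ Finset.univ.erase i₀, c i * q i :=
    Finset.sum_le_sum (fun i hi => hbound i (Finset.ne_of_mem_erase hi))
  have hcard0 : (Finset.univ.erase i₀).card = t - 1 := by
    simp [Finset.card_erase_of_mem]
  have h5 : ∑ i ∈ Finset.univ.erase i₀, (-(((L : ℚ) - 1 - (k : ℚ))))
      = -((t:ℚ) - 1) * ((L : ℚ) - 1 - (k : ℚ)) := by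
    rw [Finset.sum_const, hcard0]
    have : ((t - 1 : ℕ) : ℚ) = (t : ℚ) - 1 := by
      have : 1 ≤ t := ht
      push_cast [this]; ring
    rw [nsmul_eq_mul, this]; ring
  have hLk' : (0:ℚ) ≤ (L : ℚ) - 1 - (k : ℚ) := by
    have : (1:ℤ) ≤ L - k := hLk
    have : (1:ℚ) ≤ (L : ℚ) - (k : ℚ) := by exact_mod_cast this
    linarith
  have hkt' : (t:ℚ) - 1 ≤ (k : ℚ) := by exact_mod_cast hkt
  have h6 : -((k:ℚ)) * ((L : ℚ) - 1 - (k : ℚ)) ≤ -((t:ℚ) - 1) * ((L : ℚ) - 1 - (k : ℚ)) := by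
    nlinarith
  have h7 : 0 ≤ c i₀ * q i₀ := mul_nonneg (hcnn i₀) hq0
  nlinarith [hsum2, h4, h5, h6, h7]
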